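/- The function Q(x) := (3·sin x − 2x − x·cos x)/x⁵ is negative and strictly increasing on the open interval (0, π/2). -/

import Mathlib

open Real Set

private lemma taylor_aux {f f' : ℝ → ℝ} (hd : ∀ x, HasDerivAt f (f' x) x)
    (hp : ∀ x, 0 < x → 0 ≤ f' x) {x : ℝ} (hx : 0 ≤ x) : f 0 ≤ f x := by
  have h : MonotoneOn f (Ici 0) := by
    apply monotoneOn_of_deriv_nonneg (convex_Ici 0)
      (fun y _ => (hd y).continuousAt.continuousWithinAt)
      (fun y _ => (hd y).differentiableAt.differentiableWithinAt)
    intro y hy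
    rw [interior_Ici] at hy
    rw [(hd y).deriv]
    exact hp y hy
  exact h self_mem_Ici hx hx

private lemma hpow (n : ℕ) (c : ℝ) (x : ℝ) :
    HasDerivAt (fun y : ℝ => y ^ n / c) ((n : ℝ) * x ^ (n - 1) / c) x :=
  (hasDerivAt_pow n x).div_const c

private lemma c2 {x : ℝ} (hx : 0 ≤ x) : 1 - x ^ 2 / 2 ≤ cos x := by
  have h := taylor_aux (f := fun y => cos y - (1 - y ^ 2 / 2)) (f' := fun y => y - sin y)
    (fun y => by
      have h := (Real.hasDerivAt_cos y).sub ((hpow 2 2 y).const_sub 1)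
      exact h.congr_deriv (by push_cast; ring))
    (fun y hy => by simpa using Real.sin_le hy.le) hx
  simpa using h

private lemma s3 {x : ℝ} (hx : 0 ≤ x) : x - x ^ 3 / 6 ≤ sin x := by
  have h := taylor_aux (f := fun y => sin y - (y - y ^ 3 / 6))
    (f' := fun y => cos y - (1 - y ^ 2 / 2))
    (fun y => by
      have h := (Real.hasDerivAt_sin y).sub ((hasDerivAt_id y).sub (hpow 3 6 y))
      exact h.congr_deriv (by push_cast; ring))
    (fun y hy => sub_nonneg.2 (c2 hy.le)) hx
  simpa using h

private lemma c4 {x : ℝ} (hx : 0 ≤ x) : cos x ≤ 1 - x ^ 2 / 2 + x ^ 4 / 24 := by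
  have h := taylor_aux (f := fun y => (1 - y ^ 2 / 2 + y ^ 4 / 24) - cos y)
    (f' := fun y => sin y - (y - y ^ 3 / 6))
    (fun y => by
      have h := (((hpow 2 2 y).const_sub 1).add (hpow 4 24 y)).sub (Real.hasDerivAt_cos y)
      exact h.congr_deriv (by push_cast; ring))
    (fun y hy => sub_nonneg.2 (s3 hy.le)) hx
  have h0 : ((1:ℝ) - 0 ^ 2 / 2 + 0 ^ 4 / 24) - cos 0 = 0 := by norm_num
  linarith [h, h0]

private lemma s5 {x : ℝ} (hx : 0 ≤ x) : sin x ≤ x - x ^ 3 / 6 + x ^ 5 / 120 := by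
  have h := taylor_aux (f := fun y => (y - y ^ 3 / 6 + y ^ 5 / 120) - sin y)
    (f' := fun y => (1 - y ^ 2 / 2 + y ^ 4 / 24) - cos y)
    (fun y => by
      have h := (((hasDerivAt_id y).sub (hpow 3 6 y)).add (hpow 5 120 y)).sub
        (Real.hasDerivAt_sin y)
      exact h.congr_deriv (by push_cast; ring))
    (fun y hy => sub_nonneg.2 (c4 hy.le)) hx
  have h0 : ((0:ℝ) - 0 ^ 3 / 6 + 0 ^ 5 / 120) - sin 0 = 0 := by norm_num
  linarith [h, h0]

private lemma c6 {x : ℝ} (hx : 0 ≤ x) : 1 - x ^ 2 / 2 + x ^ 4 / 24 - x ^ 6 / 720 ≤ cos x := by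
  have h := taylor_aux (f := fun y => cos y - (1 - y ^ 2 / 2 + y ^ 4 / 24 - y ^ 6 / 720))
    (f' := fun y => (y - y ^ 3 / 6 + y ^ 5 / 120) - sin y)
    (fun y => by
      have h := (Real.hasDerivAt_cos y).sub
        (((hpow 2 2 y).const_sub 1).add ((hpow 4 24 y).sub (hpow 6 720 y)))
      refine (h.congr_deriv ?_).congr_of_eventuallyEq (Filter.Eventually.of_forall fun z => ?_)
      · push_cast; ring
      · simp only [Pi.sub_apply, Pi.add_apply, id_eq]; ring)
    (fun y hy => sub_nonneg.2 (s5 hy.le)) hx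
  have h0 : cos 0 - ((1:ℝ) - 0 ^ 2 / 2 + 0 ^ 4 / 24 - 0 ^ 6 / 720) = 0 := by norm_num
  linarith [h, h0]

private lemma s7 {x : ℝ} (hx : 0 ≤ x) :
    x - x ^ 3 / 6 + x ^ 5 / 120 - x ^ 7 / 5040 ≤ sin x := by
  have h := taylor_aux
    (f := fun y => sin y - (y - y ^ 3 / 6 + y ^ 5 / 120 - y ^ 7 / 5040))
    (f' := fun y => cos y - (1 - y ^ 2 / 2 + y ^ 4 / 24 - y ^ 6 / 720))
    (fun y => by
      have h := (Real.hasDerivAt_sin y).sub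
        (((hasDerivAt_id y).sub (hpow 3 6 y)).add ((hpow 5 120 y).sub (hpow 7 5040 y)))
      refine (h.congr_deriv ?_).congr_of_eventuallyEq (Filter.Eventually.of_forall fun z => ?_)
      · push_cast; ring
      · simp only [Pi.sub_apply, Pi.add_apply, id_eq]; ring)
    (fun y hy => sub_nonneg.2 (c6 hy.le)) hx
  have h0 : sin 0 - ((0:ℝ) - 0 ^ 3 / 6 + 0 ^ 5 / 120 - 0 ^ 7 / 5040) = 0 := by norm_num
  linarith [h, h0]

private lemma c8 {x : ℝ} (hx : 0 ≤ x) :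
    cos x ≤ 1 - x ^ 2 / 2 + x ^ 4 / 24 - x ^ 6 / 720 + x ^ 8 / 40320 := by
  have h := taylor_aux
    (f := fun y => (1 - y ^ 2 / 2 + y ^ 4 / 24 - y ^ 6 / 720 + y ^ 8 / 40320) - cos y)
    (f' := fun y => sin y - (y - y ^ 3 / 6 + y ^ 5 / 120 - y ^ 7 / 5040))
    (fun y => by
      have h := ((((hpow 2 2 y).const_sub 1).add ((hpow 4 24 y).sub (hpow 6 720 y))).add
        (hpow 8 40320 y)).sub (Real.hasDerivAt_cos y)
      refine (h.congr_deriv ?_).congr_of_eventuallyEq (Filter.Eventually.of_forall fun z => ?_)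
      · push_cast; ring
      · simp only [Pi.sub_apply, Pi.add_apply, id_eq]; ring)
    (fun y hy => sub_nonneg.2 (s7 hy.le)) hx
  have h0 : ((1:ℝ) - 0 ^ 2 / 2 + 0 ^ 4 / 24 - 0 ^ 6 / 720 + 0 ^ 8 / 40320) - cos 0 = 0 := by
    norm_num
  linarith [h, h0]

private lemma s9 {x : ℝ} (hx : 0 ≤ x) :
    sin x ≤ x - x ^ 3 / 6 + x ^ 5 / 120 - x ^ 7 / 5040 + x ^ 9 / 362880 := by
  have h := taylor_aux
    (f := fun y => (y - y ^ 3 / 6 + y ^ 5 / 120 - y ^ 7 / 5040 + y ^ 9 / 362880) - sin y)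
    (f' := fun y => (1 - y ^ 2 / 2 + y ^ 4 / 24 - y ^ 6 / 720 + y ^ 8 / 40320) - cos y)
    (fun y => by
      have h := ((((hasDerivAt_id y).sub (hpow 3 6 y)).add
        ((hpow 5 120 y).sub (hpow 7 5040 y))).add (hpow 9 362880 y)).sub (Real.hasDerivAt_sin y)
      refine (h.congr_deriv ?_).congr_of_eventuallyEq (Filter.Eventually.of_forall fun z => ?_)
      · push_cast; ring
      · simp only [Pi.sub_apply, Pi.add_apply, id_eq]; ring)
    (fun y hy => sub_nonneg.2 (c8 hy.le)) hx
  have h0 : ((0:ℝ) - 0 ^ 3 / 6 + 0 ^ 5 / 120 - 0 ^ 7 / 5040 + 0 ^ 9 / 362880) - sin 0 = 0 := by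
    norm_num
  linarith [h, h0]

-- numerator negativity
private lemma num_neg {x : ℝ} (hx : 0 < x) (hx2 : x < π / 2) :
    3 * sin x - 2 * x - x * cos x < 0 := by
  have hle : x < 1.6 := lt_of_lt_of_le hx2 (by nlinarith [Real.pi_lt_d2])
  have hsq : x ^ 2 < 2.56 := by nlinarith
  have h1 := s5 hx.le
  have h2 := c6 hx.le
  have hC : x ^ 7 < 2.56 * x ^ 5 := by
    calc x ^ 7 = x ^ 5 * x ^ 2 := by ring
    _ < x ^ 5 * 2.56 := by exact mul_lt_mul_of_pos_left hsq (pow_pos hx 5)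
    _ = 2.56 * x ^ 5 := by ring
  nlinarith [mul_le_mul_of_nonneg_left h2 hx.le, pow_pos hx 5]

-- the key: g x = 7 x cos x + 8 x + x^2 sin x - 15 sin x > 0
private lemma g_pos {x : ℝ} (hx : 0 < x) (hx2 : x < π / 2) :
    0 < x * (2 * cos x - 2 + x * sin x) - 5 * (3 * sin x - 2 * x - x * cos x) := by
  have hle : x < 1.6 := lt_of_lt_of_le hx2 (by nlinarith [Real.pi_lt_d2])
  have hsq : x ^ 2 < 2.56 := by nlinarith
  have h1 := c6 hx.le
  have h2 := s7 hx.le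
  have h3 := s9 hx.le
  have h7 : 0 < x ^ 7 := pow_pos hx 7
  have hC : x ^ 9 < 2.56 * x ^ 7 := by
    calc x ^ 9 = x ^ 7 * x ^ 2 := by ring
    _ < x ^ 7 * 2.56 := by exact mul_lt_mul_of_pos_left hsq h7
    _ = 2.56 * x ^ 7 := by ring
  nlinarith [mul_le_mul_of_nonneg_left h1 hx.le, mul_le_mul_of_nonneg_left h2 (sq_nonneg x), h7]

theorem Q_neg_strictMonoOn :
    (∀ x ∈ Ioo 0 (π / 2), (3 * sin x - 2 * x - x * cos x) / x ^ 5 < 0) ∧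
    StrictMonoOn (fun x : ℝ => (3 * sin x - 2 * x - x * cos x) / x ^ 5) (Ioo 0 (π / 2)) := by
  constructor
  · intro x hx
    exact div_neg_of_neg_of_pos (num_neg hx.1 hx.2) (pow_pos hx.1 5)
  · apply strictMonoOn_of_deriv_pos (convex_Ioo 0 (π / 2))
    · apply ContinuousOn.div
      · fun_prop
      · fun_prop
      · intro x hx; exact pow_ne_zero 5 (ne_of_gt hx.1)
    · intro x hx
      rw [interior_Ioo] at hx
      obtain ⟨hx1, hx2⟩ := hx
      have hN : HasDerivAt (fun y : ℝ => 3 * sin y - 2 * y - y * cos y)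
          (2 * cos x - 2 + x * sin x) x := by
        have h := (((Real.hasDerivAt_sin x).const_mul 3).sub
          ((hasDerivAt_id x).const_mul 2)).sub
          ((hasDerivAt_id x).mul (Real.hasDerivAt_cos x))
        exact h.congr_deriv (by simp only [id_eq]; ring)
      have hD : HasDerivAt (fun y : ℝ => y ^ 5) (5 * x ^ 4) x := by
        simpa using hasDerivAt_pow 5 x
      have hQ : HasDerivAt (fun y : ℝ => (3 * sin y - 2 * y - y * cos y) / y ^ 5)
          (((2 * cos x - 2 + x * sin x) * x ^ 5 -
            (3 * sin x - 2 * x - x * cos x) * (5 * x ^ 4)) / (x ^ 5) ^ 2) x :=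
        hN.div hD (pow_ne_zero 5 (ne_of_gt hx1))
      rw [hQ.deriv]
      apply div_pos
      · have hg := g_pos hx1 hx2
        nlinarith [pow_pos hx1 4]
      · positivity
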